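/- arXiv:1001.0767 — 4 statements merged into one kernel-verified Lean document; each statement's English description precedes it below -/
import Mathlib

section
/- Let f : {0,1}ⁿ → {0,1} with n ≥ 1. If f is constant, then the amplitude of |0ⁿ⟩ in H^{⊗n}(2^{-n/2} Σ_x (−1)^{f(x)}|x⟩) has absolute value 1; if f is balanced (|f⁻¹(0)| = |f⁻¹(1)| = 2^{n−1}), then that amplitude is 0. -/
/-- Deutsch–Jozsa correctness: the amplitude of `|0ⁿ⟩` in
`H^{⊗n}(2^{-n/2} Σ_x (−1)^{f(x)}|x⟩)` has absolute value 1 if `f` is constant,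
and is 0 if `f` is balanced. -/
theorem stmt_3 (n : ℕ) (hn : 1 ≤ n) (f : (Fin n → ZMod 2) → ZMod 2)
    (amp : ℂ)
    (hamp : amp = ((Real.sqrt 2 : ℂ) ^ n)⁻¹ * ∑ x : Fin n → ZMod 2,
      (-1 : ℂ) ^ (∑ i, x i * (fun _ : Fin n => (0 : ZMod 2)) i).val *
        (((Real.sqrt 2 : ℂ) ^ n)⁻¹ * (-1 : ℂ) ^ (f x).val)) :
    ((∀ x y, f x = f y) → ‖amp‖ = 1) ∧
    (((Finset.univ.filter fun x => f x = 0).card = 2 ^ (n - 1) ∧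
        (Finset.univ.filter fun x => f x = 1).card = 2 ^ (n - 1)) → amp = 0) := by
  have hall : ∀ a : ZMod 2, a = 0 ∨ a = 1 := by decide
  have h2c : ((Real.sqrt 2 : ℂ))^2 = 2 := by
    norm_cast; exact Real.sq_sqrt (by norm_num)
  have hamp' : amp = ((2:ℂ)^n)⁻¹ * ∑ x : Fin n → ZMod 2, (-1:ℂ)^(f x).val := by
    rw [hamp]
    simp only [mul_zero, Finset.sum_const_zero, ZMod.val_zero, pow_zero, one_mul]
    rw [← Finset.mul_sum, ← mul_assoc, ← mul_inv]
    congr 1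
    rw [← pow_add, ← two_mul, pow_mul, h2c]
  set S := ∑ x : Fin n → ZMod 2, (-1:ℂ)^(f x).val with hS
  have hsplit : S = ((Finset.univ.filter fun x => f x = 0).card : ℂ)
      - ((Finset.univ.filter fun x => f x = 1).card : ℂ) := by
    rw [hS, ← Finset.sum_filter_add_sum_filter_not Finset.univ (fun x => f x = 0)]
    have e0 : ∀ x ∈ Finset.univ.filter (fun x => f x = 0), (-1:ℂ)^(f x).val = 1 := by
      intro x hx
      simp only [Finset.mem_filter] at hx
      rw [hx.2]; simp
    have e1 : ∀ x ∈ Finset.univ.filter (fun x => ¬ f x = 0), (-1:ℂ)^(f x).val = -1 := by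
      intro x hx
      simp only [Finset.mem_filter] at hx
      have h1 : f x = 1 := (hall (f x)).resolve_left hx.2
      rw [h1]; norm_num [ZMod.val_one]
    have hfe : Finset.univ.filter (fun x => ¬ f x = 0) = Finset.univ.filter (fun x => f x = 1) := by
      apply Finset.filter_congr
      intro x _
      constructor
      · intro h; exact (hall (f x)).resolve_left h
      · intro h; rw [h]; exact one_ne_zero
    rw [Finset.sum_congr rfl e0, Finset.sum_congr rfl e1, hfe, Finset.sum_const,
      Finset.sum_const]
    simp [sub_eq_add_neg]
  constructor
  · intro hconst
    have hc : ∀ x, f x = f (fun _ => 0) := fun x => hconst x _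
    have hcard : (Finset.univ : Finset (Fin n → ZMod 2)).card = 2 ^ n := by
      simp [Finset.card_univ]
    rcases hall (f (fun _ => 0)) with h0 | h1
    · have hSval : S = (2:ℂ)^n := by
        rw [hS]
        have e : ∀ x : Fin n → ZMod 2, (-1:ℂ)^(f x).val = 1 := by
          intro x; rw [hc x, h0]; simp
        rw [Finset.sum_congr rfl (fun x _ => e x)]
        simp [hcard]
      rw [hamp', hSval, inv_mul_cancel₀ (pow_ne_zero _ two_ne_zero)]
      simp
    · have hSval : S = -(2:ℂ)^n := by
        rw [hS]
        have e : ∀ x : Fin n → ZMod 2, (-1:ℂ)^(f x).val = -1 := by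
          intro x; rw [hc x, h1]; norm_num [ZMod.val_one]
        rw [Finset.sum_congr rfl (fun x _ => e x)]
        simp [hcard]
      rw [hamp', hSval, mul_neg, inv_mul_cancel₀ (pow_ne_zero _ two_ne_zero)]
      simp
  · rintro ⟨hc0, hc1⟩
    rw [hamp', hsplit, hc0, hc1, sub_self, mul_zero]
end

section
/- Let 0 ≤ θ ≤ π/2 and suppose A|0…0⟩ = sin(θ)|ψ₁⟩ + cos(θ)|ψ₀⟩ with |ψ₀⟩,|ψ₁⟩ orthonormal. Let Q act on span{|ψ₀⟩,|ψ₁⟩} as the composition of the reflection sending |ψ₁⟩ ↦ −|ψ₁⟩, |ψ₀⟩ ↦ |ψ₀⟩ followed by the rotation-reflection −(I − 2|η⟩⟨η|) where |η⟩ = A|0…0⟩. Then for every natural number k, Q^k A|0…0⟩ = sin((2k+1)θ)|ψ₁⟩ + cos((2k+1)θ)|ψ₀⟩. -/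
/-- amplitude amplification: in the 2-dimensional invariant subspace,
identified with `ℝ²` via the orthonormal basis `(|ψ₀⟩, |ψ₁⟩)`, the Grover iterate
`Q = −(I − 2|η⟩⟨η|) ∘ U_f` (with `η = A|0…0⟩ = (cos θ, sin θ)` and `U_f = diag(1,−1)`)
satisfies `Q^k A|0…0⟩ = sin((2k+1)θ)|ψ₁⟩ + cos((2k+1)θ)|ψ₀⟩` for every `k`. -/
theorem stmt_6 (θ : ℝ) (hθ0 : 0 ≤ θ) (hθ : θ ≤ Real.pi / 2)
    (η : Fin 2 → ℝ) (hη : η = ![Real.cos θ, Real.sin θ])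
    (Uf Q : Matrix (Fin 2) (Fin 2) ℝ)
    (hUf : Uf = !![1, 0; 0, -1])
    (hQ : Q = -((1 : Matrix (Fin 2) (Fin 2) ℝ) - 2 • Matrix.vecMulVec η η) * Uf) :
    ∀ k : ℕ, (Q ^ k).mulVec η =
      ![Real.cos ((2 * k + 1) * θ), Real.sin ((2 * k + 1) * θ)] := by
  have hQ' : Q = !![Real.cos (2*θ), -Real.sin (2*θ); Real.sin (2*θ), Real.cos (2*θ)] := by
    subst hη hUf hQ
    ext i j
    fin_cases i <;> fin_cases j <;>
      simp [Matrix.vecMulVec, Matrix.mul_apply, Fin.sum_univ_two, Real.cos_two_mul,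
        Real.sin_two_mul, Matrix.one_apply] <;>
      nlinarith [Real.sin_sq_add_cos_sq θ]
  intro k
  induction k with
  | zero => subst hη; ext i; fin_cases i <;> simp
  | succ n ih =>
    rw [pow_succ', ← Matrix.mulVec_mulVec, ih, hQ']
    have h1 : (2 * ((n : ℝ) + 1) + 1) * θ = 2 * θ + (2 * n + 1) * θ := by ring
    ext i
    fin_cases i <;>
      simp [Matrix.mulVec, dotProduct, Fin.sum_univ_two] <;>
      push_cast <;> rw [h1] <;>
      simp [Real.cos_add, Real.sin_add] <;> ring
end

section
/- In the continuous-time quantum walk search on the complete graph with Hamiltonian H = |V⟩⟨V| + |M⟩⟨M|, starting from the uniform state |V⟩ with α = ⟨M|V⟩ = √(m/n), the probability of measuring a marked vertex at time t equals α² cos²(αt) + sin²(αt); in particular at time t = π/(2α) = (π/2)√(n/m) this probability is 1. -/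
open scoped ComplexInnerProductSpace

set_option maxHeartbeats 1000000 in
lemma exp_eigen_aux {E : Type*} [NormedAddCommGroup E] [NormedSpace ℂ E] [CompleteSpace E]
    (A : E →L[ℂ] E) (x : E) (c : ℂ) (h : A x = c • x) :
    NormedSpace.exp A x = Complex.exp c • x := by
  have hpow : ∀ n : ℕ, (A ^ n) x = c ^ n • x := by
    intro n
    induction n with
    | zero => simp
    | succ n ih =>
      rw [pow_succ, pow_succ, ContinuousLinearMap.mul_apply, h, map_smul, ih, smul_smul,
        mul_comm]
  have hsA : Summable fun n : ℕ => ((n.factorial : ℂ))⁻¹ • A ^ n :=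
    NormedSpace.expSeries_summable' A
  have hsc : Summable fun n : ℕ => ((n.factorial : ℂ))⁻¹ • c ^ n :=
    NormedSpace.expSeries_summable' c
  rw [NormedSpace.exp_eq_tsum ℂ]
  have h1 := (ContinuousLinearMap.apply ℂ E x).map_tsum hsA
  simp only [ContinuousLinearMap.apply_apply] at h1
  rw [h1]
  simp only [ContinuousLinearMap.smul_apply, hpow, smul_smul]
  rw [Summable.tsum_smul_const (by simpa [smul_eq_mul] using hsc), Complex.exp_eq_exp_ℂ,
    NormedSpace.exp_eq_tsum ℂ]
  simp [smul_eq_mul]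

/-- continuous-time quantum walk search on the complete graph:
with `H = |V⟩⟨V| + |M⟩⟨M|`, starting from the uniform state `|V⟩`, and
`α = ⟨M|V⟩ = √(m/n)`, the probability of measuring a marked vertex at time `t` equals
`α² cos²(αt) + sin²(αt)`; at `t = π/(2α)` it equals `1`.  (Global phase ignored via
`H' = H − I`.) -/
theorem stmt_14 {V : Type*} [Fintype V] [DecidableEq V]
    (M : Finset V) (hM : M.Nonempty)
    (vV vM : EuclideanSpace ℂ V)
    (hvV : ∀ v, vV v = ((Real.sqrt (Fintype.card V) : ℂ))⁻¹)
    (hvM : ∀ v, vM v = if v ∈ M then ((Real.sqrt M.card : ℂ))⁻¹ else 0)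
    (H : EuclideanSpace ℂ V →L[ℂ] EuclideanSpace ℂ V)
    (hH : ∀ x, H x = ⟪vV, x⟫ • vV + ⟪vM, x⟫ • vM)
    (α : ℝ) (hα : α = Real.sqrt ((M.card : ℝ) / (Fintype.card V : ℝ))) :
    (∀ t : ℝ,
      ∑ v ∈ M, ‖(NormedSpace.exp ((-Complex.I * (t : ℂ)) • (H - 1))) vV v‖ ^ 2
        = α ^ 2 * Real.cos (α * t) ^ 2 + Real.sin (α * t) ^ 2) ∧
    ∑ v ∈ M, ‖
        (NormedSpace.exp ((-Complex.I * ((Real.pi / (2 * α) : ℝ) : ℂ)) • (H - 1))) vV v‖ ^ 2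
      = 1 := by
  have hm : 0 < (M.card : ℝ) := by exact_mod_cast hM.card_pos
  have hn : 0 < (Fintype.card V : ℝ) := by
    have h1 : 0 < Fintype.card V := Fintype.card_pos_iff.mpr ⟨hM.choose⟩
    exact_mod_cast h1
  set sn := Real.sqrt (Fintype.card V) with hsn
  set sm := Real.sqrt (M.card) with hsm
  have hsnp : 0 < sn := Real.sqrt_pos.mpr hn
  have hsmp : 0 < sm := Real.sqrt_pos.mpr hm
  have hsn2 : sn * sn = (Fintype.card V : ℝ) := Real.mul_self_sqrt hn.le
  have hsm2 : sm * sm = (M.card : ℝ) := Real.mul_self_sqrt hm.le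
  have hα' : α = sm / sn := by rw [hα, Real.sqrt_div hm.le]
  have hαp : 0 < α := by rw [hα']; positivity
  have hsnC : (sn:ℂ) ≠ 0 := by exact_mod_cast hsnp.ne'
  have hsmC : (sm:ℂ) ≠ 0 := by exact_mod_cast hsmp.ne'
  have hcn : ((Fintype.card V : ℕ):ℂ) = (sn:ℂ) * (sn:ℂ) := by exact_mod_cast hsn2.symm
  have hcm : ((M.card : ℕ):ℂ) = (sm:ℂ) * (sm:ℂ) := by exact_mod_cast hsm2.symm
  -- inner products
  have iVV : ⟪vV, vV⟫ = 1 := by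
    simp only [PiLp.inner_apply, hvV, RCLike.inner_apply, map_inv₀, Complex.conj_ofReal]
    rw [Finset.sum_const, Finset.card_univ, nsmul_eq_mul, hcn]
    field_simp
  have iMV : ⟪vM, vV⟫ = (α:ℂ) := by
    simp only [PiLp.inner_apply, hvV, hvM, RCLike.inner_apply, map_inv₀, Complex.conj_ofReal,
      apply_ite (starRingEnd ℂ), map_zero, mul_ite, mul_zero]
    rw [Finset.sum_ite_mem, Finset.univ_inter, Finset.sum_const, nsmul_eq_mul, hα', hcm]
    push_cast
    field_simp
  have iVM : ⟪vV, vM⟫ = (α:ℂ) := by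
    simp only [PiLp.inner_apply, hvV, hvM, RCLike.inner_apply, map_inv₀, Complex.conj_ofReal,
      ite_mul, zero_mul]
    rw [Finset.sum_ite_mem, Finset.univ_inter, Finset.sum_const, nsmul_eq_mul, hα', hcm]
    push_cast
    field_simp
  have iMM : ⟪vM, vM⟫ = 1 := by
    have hterm : ∀ v, vM v * (starRingEnd ℂ) (vM v)
        = if v ∈ M then ((sm:ℂ)⁻¹ * (sm:ℂ)⁻¹) else 0 := by
      intro v; by_cases h : v ∈ M <;> simp [hvM, h, Complex.conj_ofReal]
    simp only [PiLp.inner_apply, RCLike.inner_apply, hterm]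
    rw [Finset.sum_ite_mem, Finset.univ_inter, Finset.sum_const, nsmul_eq_mul, hcm]
    field_simp
  -- action of H - 1
  have h1 : (H - 1) vV = (α:ℂ) • vM := by
    rw [ContinuousLinearMap.sub_apply, ContinuousLinearMap.one_apply, hH, iVV, iMV, one_smul]
    abel
  have h2 : (H - 1) vM = (α:ℂ) • vV := by
    rw [ContinuousLinearMap.sub_apply, ContinuousLinearMap.one_apply, hH, iVM, iMM, one_smul]
    abel
  -- evolution formula
  have key : ∀ t : ℝ, (NormedSpace.exp ((-Complex.I * (t : ℂ)) • (H - 1))) vV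
      = (Real.cos (α*t) : ℂ) • vV + (-(Complex.I * (Real.sin (α*t) : ℂ))) • vM := by
    intro t
    set A := (-Complex.I * (t:ℂ)) • (H - 1) with hA
    have hu1 : A (vV + vM) = (-Complex.I * t * α) • (vV + vM) := by
      rw [hA, ContinuousLinearMap.smul_apply, map_add, h1, h2]
      match_scalars <;> ring
    have hu2 : A (vV - vM) = (Complex.I * t * α) • (vV - vM) := by
      rw [hA, ContinuousLinearMap.smul_apply, map_sub, h1, h2]
      match_scalars <;> ring
    have e1 := exp_eigen_aux A (vV + vM) _ hu1
    have e2 := exp_eigen_aux A (vV - vM) _ hu2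
    have hdecomp : vV = (1/2 : ℂ) • ((vV + vM) + (vV - vM)) := by
      match_scalars <;> ring
    have hc1 : Complex.exp (-Complex.I * t * α)
        = ((Real.cos (α*t) : ℝ) : ℂ) - ((Real.sin (α*t) : ℝ) : ℂ) * Complex.I := by
      rw [show (-Complex.I * t * α : ℂ) = (-(((α*t : ℝ)) : ℂ)) * Complex.I by push_cast; ring,
        Complex.exp_mul_I, Complex.cos_neg, Complex.sin_neg, ← Complex.ofReal_cos,
        ← Complex.ofReal_sin]
      ring
    have hc2 : Complex.exp (Complex.I * t * α)
        = ((Real.cos (α*t) : ℝ) : ℂ) + ((Real.sin (α*t) : ℝ) : ℂ) * Complex.I := by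
      rw [show (Complex.I * t * α : ℂ) = (((α*t : ℝ)) : ℂ) * Complex.I by push_cast; ring,
        Complex.exp_mul_I, ← Complex.ofReal_cos, ← Complex.ofReal_sin]
    calc (NormedSpace.exp A) vV
        = (1/2 : ℂ) • ((NormedSpace.exp A) (vV + vM) + (NormedSpace.exp A) (vV - vM)) := by
          conv_lhs => rw [hdecomp]
          rw [map_smul, map_add]
      _ = (1/2 : ℂ) • (Complex.exp (-Complex.I * t * α) • (vV + vM)
            + Complex.exp (Complex.I * t * α) • (vV - vM)) := by rw [e1, e2]
      _ = (Real.cos (α*t) : ℂ) • vV + (-(Complex.I * (Real.sin (α*t) : ℂ))) • vM := by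
          rw [hc1, hc2]
          match_scalars <;> ring
  -- probability formula
  have hprob : ∀ t : ℝ,
      ∑ v ∈ M, ‖(NormedSpace.exp ((-Complex.I * (t : ℂ)) • (H - 1))) vV v‖ ^ 2
        = α ^ 2 * Real.cos (α * t) ^ 2 + Real.sin (α * t) ^ 2 := by
    intro t
    have hterm : ∀ v ∈ M,
        ‖(NormedSpace.exp ((-Complex.I * (t : ℂ)) • (H - 1))) vV v‖ ^ 2
          = Real.cos (α*t)^2 / (Fintype.card V : ℝ) + Real.sin (α*t)^2 / (M.card : ℝ) := by
      intro v hv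
      rw [key t]
      have happ : (((Real.cos (α*t) : ℝ) : ℂ) • vV + (-(Complex.I * ((Real.sin (α*t) : ℝ) : ℂ))) • vM) v
          = (((Real.cos (α*t) / sn : ℝ)) : ℂ) + (((-(Real.sin (α*t) / sm) : ℝ)) : ℂ) * Complex.I := by
        simp only [PiLp.add_apply, PiLp.smul_apply, hvV, hvM, if_pos hv, smul_eq_mul]
        push_cast
        ring
      rw [happ, Complex.sq_norm, Complex.normSq_add_mul_I, neg_sq, div_pow, div_pow,
        show sn^2 = (Fintype.card V : ℝ) from by rw [sq]; exact hsn2,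
        show sm^2 = (M.card : ℝ) from by rw [sq]; exact hsm2]
    rw [Finset.sum_congr rfl hterm, Finset.sum_const, nsmul_eq_mul]
    have hα2 : α^2 = (M.card : ℝ) / (Fintype.card V : ℝ) := by
      rw [hα, Real.sq_sqrt (by positivity)]
    rw [hα2]
    field_simp
  refine ⟨hprob, ?_⟩
  rw [hprob (Real.pi / (2 * α)), show α * (Real.pi / (2 * α)) = Real.pi / 2 by
    field_simp]
  simp
end

section
/- With notation as above, |Pr(u,v,T) − Pr(u,v,∞)| ≤ 2/(T·δ) for all T > 0, where δ is the minimum gap between any two distinct eigenvalues of A and Pr(u,v,∞) = Σ_λ |⟨v|P_λ|u⟩|². -/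
open scoped ComplexInnerProductSpace

section aux
variable {E : Type*} [NormedAddCommGroup E] [InnerProductSpace ℂ E] [CompleteSpace E]

lemma st16_pow {k : ℕ} (P : Fin k → E →L[ℂ] E)
    (hidem : ∀ i, P i ∘L P i = P i)
    (horth : ∀ i j, i ≠ j → P i ∘L P j = 0)
    (hsum : ∑ i, P i = 1) (x : Fin k → ℂ) :
    ∀ n : ℕ, (∑ i, x i • P i) ^ n = ∑ i, x i ^ n • P i := by
  intro n
  induction n with
  | zero => simpa using hsum.symm
  | succ n ih =>
    rw [pow_succ, ih, Finset.sum_mul_sum]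
    refine Finset.sum_congr rfl fun i _ => ?_
    rw [Finset.sum_eq_single i]
    · rw [smul_mul_smul_comm, ← pow_succ]
      congr 1
      rw [ContinuousLinearMap.mul_def, hidem i]
    · intro j _ hj
      rw [smul_mul_smul_comm, ContinuousLinearMap.mul_def, horth i j (Ne.symm hj), smul_zero]
    · simp

lemma st16_exp {k : ℕ} (P : Fin k → E →L[ℂ] E)
    (hidem : ∀ i, P i ∘L P i = P i)
    (horth : ∀ i j, i ≠ j → P i ∘L P j = 0)
    (hsum : ∑ i, P i = 1) (x : Fin k → ℂ) :
    NormedSpace.exp (∑ i, x i • P i) = ∑ i, Complex.exp (x i) • P i := by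
  have hscal : ∀ i : Fin k, Summable fun n : ℕ => (n.factorial : ℂ)⁻¹ * x i ^ n := by
    intro i
    simpa [smul_eq_mul] using NormedSpace.expSeries_summable' (𝕂 := ℂ) (x i)
  have hsummable : ∀ i : Fin k, Summable fun n : ℕ => ((n.factorial : ℂ)⁻¹ * x i ^ n) • P i :=
    fun i => (hscal i).smul_const (P i)
  rw [NormedSpace.exp_eq_tsum ℂ]
  dsimp only
  have h1 : ∀ n : ℕ, (n.factorial : ℂ)⁻¹ • (∑ i, x i • P i) ^ n
      = ∑ i, ((n.factorial : ℂ)⁻¹ * x i ^ n) • P i := by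
    intro n
    rw [st16_pow P hidem horth hsum x n, Finset.smul_sum]
    simp [smul_smul]
  rw [tsum_congr h1, Summable.tsum_finsetSum (fun i _ => hsummable i)]
  refine Finset.sum_congr rfl fun i _ => ?_
  rw [Summable.tsum_smul_const (hscal i)]
  congr 1
  rw [Complex.exp_eq_exp_ℂ, NormedSpace.exp_eq_tsum ℂ]
  simp [smul_eq_mul]

lemma st16_norm_sum {k : ℕ} (P : Fin k → E →L[ℂ] E)
    (hsa : ∀ i (x y : E), ⟪P i x, y⟫ = ⟪x, P i y⟫)
    (hidem : ∀ i, P i ∘L P i = P i)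
    (hsum : ∑ i, P i = 1) (u : E) :
    ∑ i, ‖P i u‖ ^ 2 = ‖u‖ ^ 2 := by
  have hu : (∑ i, P i u) = u := by
    have := congrArg (fun f : E →L[ℂ] E => f u) hsum
    simpa using this
  have key : (⟪u, u⟫ : ℂ) = ∑ i, ⟪P i u, P i u⟫ := by
    have hP : ∀ i, P i (P i u) = P i u := fun i => by
      simpa using congrArg (fun f : E →L[ℂ] E => f u) (hidem i)
    calc (⟪u, u⟫ : ℂ) = ⟪u, ∑ i, P i u⟫ := by rw [hu]
      _ = ∑ i, ⟪u, P i u⟫ := inner_sum _ _ _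
      _ = ∑ i, ⟪P i u, P i u⟫ := Finset.sum_congr rfl fun i _ => by
          rw [hsa i u (P i u), hP i]
  have h2 : ((‖u‖ ^ 2 : ℝ) : ℂ) = ((∑ i, ‖P i u‖ ^ 2 : ℝ) : ℂ) := by
    push_cast
    simpa [inner_self_eq_norm_sq_to_K] using key
  exact_mod_cast h2.symm

end aux

theorem stmt_16 {E : Type*} [NormedAddCommGroup E] [InnerProductSpace ℂ E]
    [FiniteDimensional ℂ E]
    (k : ℕ) (hk : 2 ≤ k) (l : Fin k → ℝ) (hl : Function.Injective l)
    (P : Fin k → E →L[ℂ] E)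
    (hsa : ∀ i (x y : E), ⟪P i x, y⟫ = ⟪x, P i y⟫)
    (hidem : ∀ i, P i ∘L P i = P i)
    (horth : ∀ i j, i ≠ j → P i ∘L P j = 0)
    (hsum : ∑ i, P i = 1)
    (A : E →L[ℂ] E) (hA : A = ∑ i, (l i : ℂ) • P i)
    (u v : E) (hu : ‖u‖ = 1) (hv : ‖v‖ = 1)
    (δ : ℝ) (hδ : IsLeast {d : ℝ | ∃ i j : Fin k, i ≠ j ∧ d = |l i - l j|} δ) :
    ∀ T : ℝ, 0 < T →
      |(1 / T) * (∫ t in (0 : ℝ)..T,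
            ‖⟪v, (NormedSpace.exp ((-Complex.I * (t : ℂ)) • A)) u⟫‖ ^ 2)
          - ∑ i, ‖⟪v, P i u⟫‖ ^ 2| ≤ 2 / (T * δ) := by
  intro T hT
  obtain ⟨⟨i0, j0, hij0, hd0⟩, hlb⟩ := hδ
  have hδpos : 0 < δ := by
    rw [hd0]
    exact abs_sub_pos.mpr (fun h => hij0 (hl h))
  have hδle : ∀ i j : Fin k, i ≠ j → δ ≤ |l i - l j| := fun i j h => hlb ⟨i, j, h, rfl⟩
  set c : Fin k → ℂ := fun i => ⟪v, P i u⟫ with hc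
  -- inner product formula
  have hinner : ∀ t : ℝ,
      (⟪v, (NormedSpace.exp ((-Complex.I * (t : ℂ)) • A)) u⟫ : ℂ)
        = ∑ i, Complex.exp (-Complex.I * (l i : ℂ) * (t : ℂ)) * c i := by
    intro t
    have hAeq : (-Complex.I * (t : ℂ)) • A
        = ∑ i, (-Complex.I * (l i : ℂ) * (t : ℂ)) • P i := by
      rw [hA, Finset.smul_sum]
      refine Finset.sum_congr rfl fun i _ => ?_
      rw [smul_smul]
      congr 1
      ring
    rw [hAeq, st16_exp P hidem horth hsum]
    simp [inner_sum, inner_smul_right, hc]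
  set g : Fin k → Fin k → ℝ → ℂ := fun i j t =>
    (c i * (starRingEnd ℂ) (c j))
      * Complex.exp ((-Complex.I * ((l i - l j : ℝ) : ℂ)) * (t : ℂ)) with hgdef
  have habs : ∀ t : ℝ,
      ‖⟪v, (NormedSpace.exp ((-Complex.I * (t : ℂ)) • A)) u⟫‖ ^ 2
        = ∑ i, ∑ j, (g i j t).re := by
    intro t
    have hz : (∑ i, ∑ j, g i j t)
        = (∑ i, Complex.exp (-Complex.I * (l i : ℂ) * (t : ℂ)) * c i)
          * (starRingEnd ℂ) (∑ j, Complex.exp (-Complex.I * (l j : ℂ) * (t : ℂ)) * c j) := by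
      rw [map_sum, Finset.sum_mul_sum]
      refine Finset.sum_congr rfl fun i _ => Finset.sum_congr rfl fun j _ => ?_
      rw [map_mul, ← Complex.exp_conj]
      have h1 : (starRingEnd ℂ) (-Complex.I * (l j : ℂ) * (t : ℂ))
          = Complex.I * (l j : ℂ) * (t : ℂ) := by
        simp [map_mul, Complex.conj_I, Complex.conj_ofReal]
      have h2 : Complex.exp ((-Complex.I * ((l i - l j : ℝ) : ℂ)) * (t : ℂ))
          = Complex.exp (-Complex.I * (l i : ℂ) * (t : ℂ))
            * Complex.exp (Complex.I * (l j : ℂ) * (t : ℂ)) := by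
        rw [← Complex.exp_add]
        congr 1
        push_cast
        ring
      rw [h1]
      simp only [hgdef]
      rw [h2]
      ring
    rw [hinner t]
    have hns : Complex.normSq (∑ i, Complex.exp (-Complex.I * (l i : ℂ) * (t : ℂ)) * c i)
        = ((∑ i, Complex.exp (-Complex.I * (l i : ℂ) * (t : ℂ)) * c i)
          * (starRingEnd ℂ) (∑ j, Complex.exp (-Complex.I * (l j : ℂ) * (t : ℂ)) * c j)).re := by
      rw [Complex.mul_conj, Complex.ofReal_re]
    rw [Complex.sq_norm, hns, ← hz, Complex.re_sum]
    exact Finset.sum_congr rfl fun i _ => Complex.re_sum _ _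
  have hgcont : ∀ i j, Continuous (g i j) := by
    intro i j
    apply Continuous.mul continuous_const
    exact Complex.continuous_exp.comp (continuous_const.mul Complex.continuous_ofReal)
  have hgint : ∀ i j, IntervalIntegrable (g i j) MeasureTheory.volume 0 T :=
    fun i j => (hgcont i j).intervalIntegrable 0 T
  set J : Fin k → Fin k → ℂ := fun i j => ∫ t in (0:ℝ)..T, g i j t with hJdef
  have hIntEq : (∫ t in (0 : ℝ)..T,
        ‖⟪v, (NormedSpace.exp ((-Complex.I * (t : ℂ)) • A)) u⟫‖ ^ 2)
      = ∑ i, ∑ j, (J i j).re := by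
    rw [intervalIntegral.integral_congr (fun t _ => habs t)]
    rw [intervalIntegral.integral_finset_sum]
    · refine Finset.sum_congr rfl fun i _ => ?_
      rw [intervalIntegral.integral_finset_sum]
      · refine Finset.sum_congr rfl fun j _ => ?_
        simpa using (Complex.reCLM.intervalIntegral_comp_comm (hgint i j))
      · intro j _
        exact ((Complex.continuous_re.comp (hgcont i j)).intervalIntegrable 0 T)
    · intro i _
      exact ((continuous_finset_sum _ fun j _ =>
        (Complex.continuous_re.comp (hgcont i j))).intervalIntegrable 0 T)
  have hJdiag : ∀ i, (J i i).re = ‖c i‖ ^ 2 * T := by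
    intro i
    have hgi : g i i = fun _ : ℝ => c i * (starRingEnd ℂ) (c i) := by
      funext t
      simp [hgdef, sub_self]
    simp only [hJdef, hgi]
    rw [intervalIntegral.integral_const]
    rw [Complex.mul_conj]
    simp [Complex.sq_norm]
    ring
  have hJoff : ∀ i j, i ≠ j →
      ‖J i j‖ ≤ ‖c i‖ * ‖c j‖ * (2 / δ) := by
    intro i j hij
    have hω : (l i - l j) ≠ 0 := sub_ne_zero.mpr (fun h => hij (hl h))
    have hcne : (-Complex.I * ((l i - l j : ℝ) : ℂ)) ≠ 0 :=
      mul_ne_zero (neg_ne_zero.mpr Complex.I_ne_zero) (Complex.ofReal_ne_zero.mpr hω)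
    have hint : J i j = (c i * (starRingEnd ℂ) (c j)) *
        ((Complex.exp ((-Complex.I * ((l i - l j : ℝ) : ℂ)) * (T : ℂ)) - 1)
          / (-Complex.I * ((l i - l j : ℝ) : ℂ))) := by
      simp only [hJdef, hgdef]
      rw [intervalIntegral.integral_const_mul]
      congr 1
      rw [integral_exp_mul_complex hcne]
      norm_num
    have habs1 : ‖
        (Complex.exp ((-Complex.I * ((l i - l j : ℝ) : ℂ)) * (T : ℂ)) - 1)‖ ≤ 2 := by
      have h2 : ‖
          (Complex.exp ((-Complex.I * ((l i - l j : ℝ) : ℂ)) * (T : ℂ)))‖ = 1 := by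
        have heq : (-Complex.I * ((l i - l j : ℝ) : ℂ)) * (T : ℂ)
            = ((-((l i - l j) * T) : ℝ) : ℂ) * Complex.I := by
          push_cast
          ring
        rw [heq, Complex.norm_exp_ofReal_mul_I]
      have h3 : ‖
          (Complex.exp ((-Complex.I * ((l i - l j : ℝ) : ℂ)) * (T : ℂ)) - 1)‖
          ≤ ‖(Complex.exp ((-Complex.I * ((l i - l j : ℝ) : ℂ)) * (T : ℂ)))‖
            + ‖(1 : ℂ)‖ := norm_sub_le _ _
      rw [h2, norm_one] at h3
      linarith
    have habsc : ‖(-Complex.I * ((l i - l j : ℝ) : ℂ))‖ = |l i - l j| := by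
      have h4 : ‖(-Complex.I)‖ = 1 := by simp
      rw [norm_mul, h4, one_mul, Complex.norm_real, Real.norm_eq_abs]
    rw [hint, norm_mul, norm_mul, norm_div, habsc, Complex.norm_conj]
    have hωpos : 0 < |l i - l j| := abs_pos.mpr hω
    calc ‖c i‖ * ‖c j‖
          * (‖Complex.exp ((-Complex.I * ((l i - l j : ℝ) : ℂ)) * (T : ℂ)) - 1‖
              / |l i - l j|)
        ≤ ‖c i‖ * ‖c j‖ * (2 / |l i - l j|) := by
          gcongr
      _ ≤ ‖c i‖ * ‖c j‖ * (2 / δ) := by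
          gcongr
          exact hδle i j hij
  -- sum of |c i| is at most 1
  have hcle : ∀ i, ‖c i‖ ≤ ‖P i v‖ * ‖P i u‖ := by
    intro i
    have hP : P i (P i u) = P i u := by
      simpa using congrArg (fun f : E →L[ℂ] E => f u) (hidem i)
    have hci : c i = ⟪P i v, P i u⟫ := by
      simp only [hc]
      rw [hsa i v (P i u), hP]
    calc ‖c i‖ = ‖(⟪P i v, P i u⟫ : ℂ)‖ := by rw [hci]
      _ ≤ ‖P i v‖ * ‖P i u‖ := norm_inner_le_norm _ _
  have hsumu : ∑ i, ‖P i u‖ ^ 2 = 1 := by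
    rw [st16_norm_sum P hsa hidem hsum u, hu]; norm_num
  have hsumv : ∑ i, ‖P i v‖ ^ 2 = 1 := by
    rw [st16_norm_sum P hsa hidem hsum v, hv]; norm_num
  have hS : (∑ i, ‖c i‖) ≤ 1 := by
    have h1 : (∑ i, ‖c i‖) ≤ ∑ i, ‖P i v‖ * ‖P i u‖ :=
      Finset.sum_le_sum (fun i _ => hcle i)
    have h2 : (∑ i, ‖P i v‖ * ‖P i u‖) ^ 2
        ≤ (∑ i, ‖P i v‖ ^ 2) * (∑ i, ‖P i u‖ ^ 2) :=
      Finset.sum_mul_sq_le_sq_mul_sq _ _ _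
    rw [hsumu, hsumv, mul_one] at h2
    have hnn : (0 : ℝ) ≤ ∑ i, ‖P i v‖ * ‖P i u‖ :=
      Finset.sum_nonneg fun i _ => mul_nonneg (norm_nonneg _) (norm_nonneg _)
    nlinarith
  have hSnn : (0 : ℝ) ≤ ∑ i, ‖c i‖ :=
    Finset.sum_nonneg fun i _ => norm_nonneg _
  -- split and bound
  have hsplit : (∑ i, ∑ j, (J i j).re)
      = (∑ i, (J i i).re) + ∑ i, ∑ j ∈ Finset.univ.erase i, (J i j).re := by
    rw [← Finset.sum_add_distrib]
    refine Finset.sum_congr rfl fun i _ => ?_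
    exact (Finset.add_sum_erase _ _ (Finset.mem_univ i)).symm
  have hdiag : (∑ i, (J i i).re) = (∑ i, ‖c i‖ ^ 2) * T := by
    rw [Finset.sum_mul]
    exact Finset.sum_congr rfl fun i _ => hJdiag i
  set R : ℝ := ∑ i, ∑ j ∈ Finset.univ.erase i, (J i j).re with hR
  have hmain : (1 / T) * (∫ t in (0 : ℝ)..T,
        ‖⟪v, (NormedSpace.exp ((-Complex.I * (t : ℂ)) • A)) u⟫‖ ^ 2)
      - (∑ i, ‖⟪v, P i u⟫‖ ^ 2) = R / T := by
    rw [hIntEq, hsplit, hdiag]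
    have : (∑ i, ‖(fun i => (⟪v, P i u⟫ : ℂ)) i‖ ^ 2)
        = ∑ i, ‖c i‖ ^ 2 := by simp only [hc]
    field_simp
    ring
  have hRbound : |R| ≤ 2 / δ := by
    calc |R| ≤ ∑ i, |∑ j ∈ Finset.univ.erase i, (J i j).re| :=
          Finset.abs_sum_le_sum_abs _ _
      _ ≤ ∑ i, ∑ j ∈ Finset.univ.erase i, |(J i j).re| :=
          Finset.sum_le_sum fun i _ => Finset.abs_sum_le_sum_abs _ _
      _ ≤ ∑ i, ∑ j ∈ Finset.univ.erase i,
            (‖c i‖ * ‖c j‖ * (2 / δ)) := by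
          refine Finset.sum_le_sum fun i _ => Finset.sum_le_sum fun j hj => ?_
          have hij : i ≠ j := fun h => (Finset.mem_erase.mp hj).1 h.symm
          calc |(J i j).re| ≤ ‖J i j‖ := Complex.abs_re_le_norm _
            _ ≤ _ := hJoff i j hij
      _ ≤ ∑ i, ∑ j, (‖c i‖ * ‖c j‖ * (2 / δ)) := by
          refine Finset.sum_le_sum fun i _ =>
            Finset.sum_le_sum_of_subset_of_nonneg (Finset.subset_univ _) ?_
          intro j _ _
          positivity
      _ = (∑ i, ‖c i‖) * (∑ j, ‖c j‖) * (2 / δ) := by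
          rw [Finset.sum_mul_sum, Finset.sum_mul]
          exact Finset.sum_congr rfl fun i _ => by rw [Finset.sum_mul]
      _ ≤ 1 * 1 * (2 / δ) := by
          gcongr
      _ = 2 / δ := by ring
  rw [hmain, abs_div, abs_of_pos hT]
  calc |R| / T ≤ (2 / δ) / T := by gcongr
    _ = 2 / (T * δ) := by
        rw [div_div, mul_comm]
end
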